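/- Fix an integer n ≥ 1 and a real t > 0. For a : Fin (n+1) → ℝ define J(a) as the Lebesgue integral over the region {s ∈ ℝ^n : s_i > 0 for all i and ∑_{i=0}^{n−1} s_i < t} of exp(∑_{i=0}^{n−1} a_i s_i + a_n·(t − ∑_{i=0}^{n−1} s_i)). Then J(a ∘ σ) = J(a) for every permutation σ of {0,1,…,n}. -/

import Mathlib

open MeasureTheory

/-- The exponential integral over the open simplex
`{s ∈ ℝ^n : s_i > 0 ∀ i, ∑_{i<n} s_i < t}` of
`exp(∑_{i<n} a_i s_i + a_n (t - ∑_{i<n} s_i))`. -/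
noncomputable def simplexExpIntegral (n : ℕ) (t : ℝ) (a : Fin (n + 1) → ℝ) : ℝ :=
  ∫ s in {s : Fin n → ℝ | (∀ i, 0 < s i) ∧ (∑ i, s i) < t},
    Real.exp ((∑ i : Fin n, a i.castSucc * s i) + a (Fin.last n) * (t - ∑ i, s i))

namespace SimplexPermAux

variable {n : ℕ}

/-- The affine involution of `ℝ^n` that swaps `s i` with `t - ∑ s`. -/
def T (t : ℝ) (i : Fin n) (s : Fin n → ℝ) : Fin n → ℝ :=
  Function.update s i (t - ∑ k, s k)

lemma T_apply (t : ℝ) (i : Fin n) (s : Fin n → ℝ) (j : Fin n) :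
    T t i s j = if j = i then t - ∑ k, s k else s j :=
  Function.update_apply s i _ j

lemma sum_T (t : ℝ) (i : Fin n) (s : Fin n → ℝ) :
    ∑ j, T t i s j = t - s i := by
  rw [T, Finset.sum_update_of_mem (Finset.mem_univ i)]
  have h : ∑ x ∈ Finset.univ \ {i}, s x = (∑ x, s x) - s i := by
    rw [Finset.sum_sdiff_eq_sub (Finset.subset_univ _), Finset.sum_singleton]
  rw [h]; ring

lemma T_invol (t : ℝ) (i : Fin n) (s : Fin n → ℝ) : T t i (T t i s) = s := by
  funext j
  rcases eq_or_ne j i with rfl | hj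
  · rw [T_apply, if_pos rfl, sum_T]; ring
  · rw [T_apply, if_neg hj, T_apply, if_neg hj]

/-- The linear part of `T`. -/
def L (i : Fin n) : (Fin n → ℝ) →ₗ[ℝ] (Fin n → ℝ) where
  toFun s := fun j => if j = i then -∑ k, s k else s j
  map_add' s u := by
    funext j
    rcases eq_or_ne j i with rfl | hj
    · simp [Finset.sum_add_distrib]; ring
    · simp [hj]
  map_smul' c s := by
    funext j
    rcases eq_or_ne j i with rfl | hj
    · simp [Finset.mul_sum]
    · simp [hj]

lemma T_eq (t : ℝ) (i : Fin n) :
    T t i = (fun s => (fun j => if j = i then t else (0 : ℝ)) + s) ∘ (L i) := by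
  funext s j
  rcases eq_or_ne j i with rfl | hj
  · simp [T_apply, L]; ring
  · simp [T_apply, L, hj]

lemma det_L (i : Fin n) : LinearMap.det (L i) = -1 := by
  classical
  have hM : LinearMap.toMatrix' (L i) =
      1 + Matrix.replicateCol (Fin 1) (fun j => if j = i then (-1 : ℝ) else 0) *
        Matrix.replicateRow (Fin 1) (fun k => if k = i then (2 : ℝ) else 1) := by
    ext j k
    rw [LinearMap.toMatrix'_apply]
    rcases eq_or_ne j i with rfl | hj
    · simp [L, Matrix.mul_apply, Matrix.one_apply, Finset.sum_ite_eq']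
      rcases eq_or_ne k j with rfl | hk
      · norm_num
      · simp [hk, (Ne.symm hk : ¬ j = k)]
    · simp [L, hj, Matrix.mul_apply, Matrix.one_apply, Pi.single_apply]
  rw [← LinearMap.det_toMatrix', hM]
  erw [Matrix.det_one_add_replicateCol_mul_replicateRow]
  simp [dotProduct, ite_and, mul_ite, Finset.sum_ite_eq']
  norm_num

lemma measurable_T (t : ℝ) (i : Fin n) : Measurable (T t i) := by
  rw [T_eq]
  exact (measurable_const.add measurable_id).comp
    (L i).continuous_of_finiteDimensional.measurable

lemma measurePreserving_T (t : ℝ) (i : Fin n) :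
    MeasurePreserving (T t i) (volume : Measure (Fin n → ℝ)) volume := by
  refine ⟨measurable_T t i, ?_⟩
  have hg : Measurable (fun s : Fin n → ℝ => (fun j => if j = i then t else (0 : ℝ)) + s) :=
    measurable_id.const_add _
  rw [T_eq, ← Measure.map_map hg (L i).continuous_of_finiteDimensional.measurable]
  rw [Real.map_linearMap_volume_pi_eq_smul_volume_pi (by rw [det_L]; norm_num)]
  rw [det_L]
  norm_num
  exact (measurePreserving_add_left volume _).map_eq

/-- `T` as a measurable equivalence. -/
def Te (t : ℝ) (i : Fin n) : (Fin n → ℝ) ≃ᵐ (Fin n → ℝ) where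
  toFun := T t i
  invFun := T t i
  left_inv := T_invol t i
  right_inv := T_invol t i
  measurable_toFun := measurable_T t i
  measurable_invFun := measurable_T t i

lemma mem_D (t : ℝ) (i : Fin n) (s : Fin n → ℝ)
    (hs : s ∈ {s : Fin n → ℝ | (∀ i, 0 < s i) ∧ (∑ i, s i) < t}) :
    T t i s ∈ {s : Fin n → ℝ | (∀ i, 0 < s i) ∧ (∑ i, s i) < t} := by
  obtain ⟨h1, h2⟩ := hs
  refine ⟨fun j => ?_, ?_⟩
  · rw [T_apply]
    rcases eq_or_ne j i with rfl | hj
    · simpa [sub_pos] using h2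
    · simpa [hj] using h1 j
  · rw [sum_T]
    have := h1 i
    linarith

lemma preimage_D (t : ℝ) (i : Fin n) :
    T t i ⁻¹' {s : Fin n → ℝ | (∀ i, 0 < s i) ∧ (∑ i, s i) < t} =
      {s : Fin n → ℝ | (∀ i, 0 < s i) ∧ (∑ i, s i) < t} := by
  ext s
  constructor
  · intro h
    have := mem_D t i _ h
    rwa [T_invol] at this
  · exact fun h => mem_D t i s h

lemma sum_helper (i : Fin n) (F G : Fin n → ℝ) :
    ∑ j, (if j = i then F j else G j) = F i - G i + ∑ j, G j := by
  classical
  have h : ∀ j : Fin n, (if j = i then F j else G j) =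
      (if j = i then F i - G i else 0) + G j := by
    intro j
    rcases eq_or_ne j i with rfl | hj
    · simp
    · simp [hj]
  simp_rw [h]
  rw [Finset.sum_add_distrib, Finset.sum_ite_eq' Finset.univ i]
  simp

lemma key (t : ℝ) (i : Fin n) (a : Fin (n + 1) → ℝ) :
    simplexExpIntegral n t (a ∘ Equiv.swap i.castSucc (Fin.last n)) =
      simplexExpIntegral n t a := by
  classical
  unfold simplexExpIntegral
  have hcv := (measurePreserving_T t i).setIntegral_preimage_emb
    (Te t i).measurableEmbedding
    (fun s : Fin n → ℝ =>
      Real.exp ((∑ j : Fin n, a j.castSucc * s j) + a (Fin.last n) * (t - ∑ j, s j)))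
    {s : Fin n → ℝ | (∀ i, 0 < s i) ∧ (∑ i, s i) < t}
  rw [preimage_D] at hcv
  rw [← hcv]
  congr 1
  funext s
  congr 1
  have hlast : ∀ j : Fin n, j.castSucc ≠ Fin.last n := fun j =>
    ne_of_lt (Fin.castSucc_lt_last j)
  have hswap : ∀ j : Fin n, (Equiv.swap i.castSucc (Fin.last n)) j.castSucc =
      if j = i then Fin.last n else j.castSucc := by
    intro j
    rcases eq_or_ne j i with rfl | hj
    · simp
    · rw [Equiv.swap_apply_of_ne_of_ne (by simpa [Fin.castSucc_inj] using hj) (hlast j),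
        if_neg hj]
  have hS : ∑ j, T t i s j = t - s i := sum_T t i s
  simp only [Function.comp_apply, hswap, Equiv.swap_apply_right, T_apply]
  have h1 : ∑ j : Fin n, a (if j = i then Fin.last n else j.castSucc) * s j =
      ∑ j : Fin n, (if j = i then a (Fin.last n) * s j else a j.castSucc * s j) := by
    apply Finset.sum_congr rfl
    intro j _
    rcases eq_or_ne j i with rfl | hj
    · simp
    · simp [hj]
  have h2 : ∑ j : Fin n, a j.castSucc * (if j = i then t - ∑ k, s k else s j) =
      ∑ j : Fin n, (if j = i then a j.castSucc * (t - ∑ k, s k)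
        else a j.castSucc * s j) := by
    apply Finset.sum_congr rfl
    intro j _
    rcases eq_or_ne j i with rfl | hj
    · simp
    · simp [hj]
  rw [h1, h2, sum_helper i _ _, sum_helper i _ _]
  have hS' : ∑ j : Fin n, (if j = i then t - ∑ k, s k else s j) = t - s i := by
    have := hS
    simpa only [T_apply] using this
  rw [hS']
  ring

lemma swap_any (t : ℝ) (a : Fin (n + 1) → ℝ) (x y : Fin (n + 1)) :
    simplexExpIntegral n t (a ∘ Equiv.swap x y) = simplexExpIntegral n t a := by
  rcases eq_or_ne x y with rfl | hxy
  · simp [Equiv.swap_self]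
  rcases eq_or_ne x (Fin.last n) with rfl | hx
  · obtain ⟨i, rfl⟩ := Fin.exists_castSucc_eq.mpr (Ne.symm hxy)
    rw [Equiv.swap_comm]
    exact key t i a
  rcases eq_or_ne y (Fin.last n) with rfl | hy
  · obtain ⟨i, rfl⟩ := Fin.exists_castSucc_eq.mpr hx
    exact key t i a
  · obtain ⟨ix, rfl⟩ := Fin.exists_castSucc_eq.mpr hx
    obtain ⟨iy, rfl⟩ := Fin.exists_castSucc_eq.mpr hy
    have hprod : Equiv.swap (Fin.last n) ix.castSucc *
        Equiv.swap iy.castSucc (Fin.last n) * Equiv.swap (Fin.last n) ix.castSucc =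
        Equiv.swap ix.castSucc iy.castSucc :=
      Equiv.swap_mul_swap_mul_swap hy (Ne.symm hxy)
    rw [← hprod]
    have hcomp : a ∘ ⇑(Equiv.swap (Fin.last n) ix.castSucc *
        Equiv.swap iy.castSucc (Fin.last n) * Equiv.swap (Fin.last n) ix.castSucc) =
        ((a ∘ Equiv.swap (Fin.last n) ix.castSucc) ∘
          Equiv.swap iy.castSucc (Fin.last n)) ∘ Equiv.swap (Fin.last n) ix.castSucc := by
      funext z; rfl
    rw [hcomp, Equiv.swap_comm (Fin.last n) ix.castSucc, key t ix, key t iy, key t ix]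

lemma perm_any (t : ℝ) (σ : Equiv.Perm (Fin (n + 1))) :
    ∀ a : Fin (n + 1) → ℝ,
      simplexExpIntegral n t (a ∘ σ) = simplexExpIntegral n t a := by
  induction σ using Equiv.Perm.swap_induction_on
  case _ => intro a; simp
  case _ f x y hxy ih =>
    intro a
    have hcomp : a ∘ ⇑(Equiv.swap x y * f) = (a ∘ Equiv.swap x y) ∘ f := by
      funext z; rfl
    rw [hcomp, ih (a ∘ Equiv.swap x y), swap_any t a x y]

end SimplexPermAux

/-- The simplex exponential integral is invariant under permutations of the
coefficient vector `a`. -/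
theorem simplexExpIntegral_perm (n : ℕ) (hn : 1 ≤ n) (t : ℝ) (ht : 0 < t)
    (a : Fin (n + 1) → ℝ) (σ : Equiv.Perm (Fin (n + 1))) :
    simplexExpIntegral n t (a ∘ σ) = simplexExpIntegral n t a :=
  SimplexPermAux.perm_any t σ a
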